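/- Pauli-string parity norm bound (instance of Proposition 2.1 in Example 3.6): For n ≥ 1 let B_n := X^{⊗n} + Y^{⊗n} + Z^{⊗n} on (ℂ²)^{⊗n}. Then ‖B_n‖² ≤ 3 if n is odd, and ‖B_n‖² ≤ 9 if n is even. -/

import Mathlib

set_option maxHeartbeats 1000000
set_option synthInstance.maxHeartbeats 400000


open scoped BigOperators ComplexOrder

namespace Parity

variable {n : ℕ} {d : Fin n → ℕ}

/-- Kronecker product of `n` matrices, as a matrix over the product index set. -/
def kron (a : ∀ r : Fin n, Matrix (Fin (d r)) (Fin (d r)) ℂ) :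
    Matrix (∀ r, Fin (d r)) (∀ r, Fin (d r)) ℂ :=
  fun i j => ∏ r, a r (i r) (j r)

/-- The ℓ²-operator norm of a complex matrix. -/
noncomputable def opNorm {I : Type*} [Fintype I] [DecidableEq I] (A : Matrix I I ℂ) : ℝ :=
  ‖Matrix.toEuclideanCLM (𝕜 := ℂ) A‖

/-- The defect weight φ⁽ⁿ⁾ᵢⱼ. -/
noncomputable def phi {m : ℕ} (a : ∀ r : Fin n, Fin m → Matrix (Fin (d r)) (Fin (d r)) ℂ)
    (i j : Fin m) : ℝ :=
  (2 : ℝ) ^ ((1 : ℤ) - n) *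
    ∑ S ∈ Finset.univ.filter (fun S : Finset (Fin n) => Even S.card),
      (∏ r ∈ S, opNorm (a r i * a r j - a r j * a r i)) *
        (∏ r ∈ Sᶜ, opNorm (a r i * a r j + a r j * a r i))

/-- A state: positive semidefinite with trace one. -/
def IsState {I : Type*} [Fintype I] (ρ : Matrix I I ℂ) : Prop :=
  ρ.PosSemidef ∧ ρ.trace = 1

/-- The trace norm `Tr √(AᴴA)`. -/
noncomputable def traceNorm {I : Type*} [Fintype I] [DecidableEq I] (A : Matrix I I ℂ) : ℝ :=
  (((Matrix.isHermitian_conjTranspose_mul_self A).eigenvectorUnitary : Matrix I I ℂ) *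
      Matrix.diagonal (fun i => (Real.sqrt ((Matrix.isHermitian_conjTranspose_mul_self A).eigenvalues i) : ℂ)) *
      (star (Matrix.isHermitian_conjTranspose_mul_self A).eigenvectorUnitary : Matrix I I ℂ)).trace.re

/-- Logarithm of a Hermitian matrix via the functional calculus (junk value otherwise);
an eigenvalue `0` contributes `Real.log 0 = 0`. -/
noncomputable def mlog {I : Type*} [Fintype I] [DecidableEq I] (A : Matrix I I ℂ) :
    Matrix I I ℂ :=
  if hA : A.IsHermitian then
    (hA.eigenvectorUnitary : Matrix I I ℂ) *
      Matrix.diagonal (fun i => (Real.log (hA.eigenvalues i) : ℂ)) *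
      (star hA.eigenvectorUnitary : Matrix I I ℂ)
  else 0

/-- Quantum relative entropy `D(ρ‖σ) = Tr(ρ (log ρ − log σ))` (natural logarithm). -/
noncomputable def relEntropy {I : Type*} [Fintype I] [DecidableEq I] (ρ σ : Matrix I I ℂ) : ℝ :=
  (Matrix.trace (ρ * (mlog ρ - mlog σ))).re

/-- The `r`-th marginal (partial trace over all other factors). -/
noncomputable def marginal (ρ : Matrix (∀ r, Fin (d r)) (∀ r, Fin (d r)) ℂ) (r : Fin n) :
    Matrix (Fin (d r)) (Fin (d r)) ℂ :=
  fun a b => ∑ k : ∀ s, Fin (d s), if k r = a then ρ k (Function.update k r b) else 0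

/-- Total correlation `I_tot(ρ) = D(ρ‖ρ₁ ⊗ ⋯ ⊗ ρₙ)`. -/
noncomputable def Itot (ρ : Matrix (∀ r, Fin (d r)) (∀ r, Fin (d r)) ℂ) : ℝ :=
  relEntropy ρ (kron (fun r => marginal ρ r))

/-- The set of product states. -/
def ProdStates (d : Fin n → ℕ) : Set (Matrix (∀ r, Fin (d r)) (∀ r, Fin (d r)) ℂ) :=
  {σ | ∃ s : ∀ r : Fin n, Matrix (Fin (d r)) (Fin (d r)) ℂ,
    (∀ r, IsState (s r)) ∧ σ = kron s}

/-- The product threshold `Γ_prod(B)`. -/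
noncomputable def Gamma (d : Fin n → ℕ) (B : Matrix (∀ r, Fin (d r)) (∀ r, Fin (d r)) ℂ) : ℝ :=
  sSup {x : ℝ | ∃ σ ∈ ProdStates d, x = (Matrix.trace (σ * B)).re}

/-- The excess `Δ_B(ρ)`. -/
noncomputable def excess (d : Fin n → ℕ) (B ρ : Matrix (∀ r, Fin (d r)) (∀ r, Fin (d r)) ℂ) : ℝ :=
  max ((Matrix.trace (ρ * B)).re - Gamma d B) 0

end Parity

namespace PauliString

def X : Matrix (Fin 2) (Fin 2) ℂ := !![0, 1; 1, 0]
def Y : Matrix (Fin 2) (Fin 2) ℂ := !![0, -Complex.I; Complex.I, 0]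
def Z : Matrix (Fin 2) (Fin 2) ℂ := !![1, 0; 0, -1]

/-- `B_n = X^{⊗n} + Y^{⊗n} + Z^{⊗n}`. -/
def B (n : ℕ) :
    Matrix (∀ _ : Fin n, Fin 2) (∀ _ : Fin n, Fin 2) ℂ :=
  Parity.kron (d := fun _ => 2) (fun _ => X) + Parity.kron (d := fun _ => 2) (fun _ => Y) +
    Parity.kron (d := fun _ => 2) (fun _ => Z)

end PauliString


namespace PauliAux

open Parity PauliString Matrix

lemma kron_mul {n : ℕ} {d : Fin n → ℕ} (a b : ∀ r, Matrix (Fin (d r)) (Fin (d r)) ℂ) :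
    kron a * kron b = kron (fun r => a r * b r) := by
  ext i j
  simp only [kron, Matrix.mul_apply]
  rw [Finset.prod_univ_sum]
  simp [Finset.prod_mul_distrib, Fintype.piFinset_univ]

lemma kron_smul {n : ℕ} {d : Fin n → ℕ} (c : ℂ)
    (a : ∀ r, Matrix (Fin (d r)) (Fin (d r)) ℂ) :
    kron (fun r => c • a r) = c ^ n • kron a := by
  ext i j
  simp [kron, Finset.prod_mul_distrib, Finset.prod_const, Finset.card_univ]

lemma kron_one {n : ℕ} {d : Fin n → ℕ} : kron (d := d) (fun _ => 1) = 1 := by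
  ext i j
  simp [kron, Matrix.one_apply, Finset.prod_boole, funext_iff]

lemma kron_conjTranspose {n : ℕ} {d : Fin n → ℕ}
    (a : ∀ r, Matrix (Fin (d r)) (Fin (d r)) ℂ) :
    (kron a)ᴴ = kron (fun r => (a r)ᴴ) := by
  ext i j
  simp [kron, Matrix.conjTranspose_apply]

lemma XX : X * X = 1 := by
  simp [X, Matrix.mul_fin_two]; ext i j; fin_cases i <;> fin_cases j <;> simp
lemma YY : Y * Y = 1 := by
  simp [Y, Matrix.mul_fin_two]; ext i j; fin_cases i <;> fin_cases j <;>
    simp [Complex.ext_iff]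
lemma ZZ : Z * Z = 1 := by
  simp [Z, Matrix.mul_fin_two]; ext i j; fin_cases i <;> fin_cases j <;> simp
lemma XY : X * Y = Complex.I • Z := by
  simp [X, Y, Z, Matrix.mul_fin_two, Matrix.smul_of]
lemma YX : Y * X = (-Complex.I) • Z := by
  simp [X, Y, Z, Matrix.mul_fin_two, Matrix.smul_of]
lemma YZ : Y * Z = Complex.I • X := by
  simp [X, Y, Z, Matrix.mul_fin_two, Matrix.smul_of]
lemma ZY : Z * Y = (-Complex.I) • X := by
  simp [X, Y, Z, Matrix.mul_fin_two, Matrix.smul_of]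
lemma ZX : Z * X = Complex.I • Y := by
  simp [X, Y, Z, Matrix.mul_fin_two, Matrix.smul_of]
lemma XZ : X * Z = (-Complex.I) • Y := by
  simp [X, Y, Z, Matrix.mul_fin_two, Matrix.smul_of]
lemma XH : Xᴴ = X := by ext i j; fin_cases i <;> fin_cases j <;> simp [X]
lemma YH : Yᴴ = Y := by ext i j; fin_cases i <;> fin_cases j <;> simp [Y]
lemma ZH : Zᴴ = Z := by ext i j; fin_cases i <;> fin_cases j <;> simp [Z]

/-- `n`-fold Kronecker power of a single-qubit matrix. -/
def K (n : ℕ) (P : Matrix (Fin 2) (Fin 2) ℂ) :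
    Matrix (∀ _ : Fin n, Fin 2) (∀ _ : Fin n, Fin 2) ℂ :=
  Parity.kron (d := fun _ : Fin n => 2) (fun _ => P)

lemma K_mul {n : ℕ} (P Q : Matrix (Fin 2) (Fin 2) ℂ) : K n P * K n Q = K n (P * Q) :=
  kron_mul _ _

lemma K_sq_one {n : ℕ} {P : Matrix (Fin 2) (Fin 2) ℂ} (h : P * P = 1) :
    K n P * K n P = 1 := by
  rw [K_mul, h]; exact kron_one

lemma K_herm {n : ℕ} {P : Matrix (Fin 2) (Fin 2) ℂ} (h : Pᴴ = P) : (K n P)ᴴ = K n P := by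
  rw [K, kron_conjTranspose]; simp only [h]

lemma cross {n : ℕ} (hn : Odd n) {P Q R : Matrix (Fin 2) (Fin 2) ℂ}
    (h1 : P * Q = Complex.I • R) (h2 : Q * P = (-Complex.I) • R) :
    K n P * K n Q + K n Q * K n P = 0 := by
  rw [K_mul, K_mul, h1, h2]
  have e1 : K n (Complex.I • R) = Complex.I ^ n • K n R := kron_smul _ _
  have e2 : K n ((-Complex.I) • R) = (-Complex.I) ^ n • K n R := kron_smul _ _
  rw [e1, e2, hn.neg_pow]
  simp

lemma B_eq (n : ℕ) : B n = K n X + K n Y + K n Z := rfl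

lemma B_herm (n : ℕ) : (B n)ᴴ = B n := by
  rw [B_eq, Matrix.conjTranspose_add, Matrix.conjTranspose_add,
    K_herm XH, K_herm YH, K_herm ZH]

lemma B_sq {n : ℕ} (hn : Odd n) : B n * B n = (3 : ℂ) • 1 := by
  have expand : ∀ a b c : Matrix (∀ _ : Fin n, Fin 2) (∀ _ : Fin n, Fin 2) ℂ,
      (a + b + c) * (a + b + c) =
        a * a + b * b + c * c + (a * b + b * a) + (b * c + c * b) + (c * a + a * c) := by
    intros; noncomm_ring
  rw [B_eq, expand, K_sq_one XX, K_sq_one YY, K_sq_one ZZ,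
    cross hn XY YX, cross hn YZ ZY, cross hn ZX XZ]
  rw [show ((3 : ℂ) • 1 : Matrix (∀ _ : Fin n, Fin 2) (∀ _ : Fin n, Fin 2) ℂ)
      = 1 + 1 + 1 + 0 + 0 + 0 by module]

lemma opNorm_sq {I : Type*} [Fintype I] [DecidableEq I] (A : Matrix I I ℂ)
    (hA : Aᴴ = A) : opNorm A ^ 2 = opNorm (A * A) := by
  have hs : star (Matrix.toEuclideanCLM (𝕜 := ℂ) A) = Matrix.toEuclideanCLM (𝕜 := ℂ) A := by
    rw [← map_star]
    congr 1
  rw [opNorm, opNorm, _root_.map_mul, sq]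
  nth_rewrite 3 [← hs]
  exact (CStarRing.norm_star_mul_self).symm

lemma opNorm_one_le {I : Type*} [Fintype I] [DecidableEq I] :
    opNorm (1 : Matrix I I ℂ) ≤ 1 := by
  rw [opNorm, _root_.map_one]
  simpa [ContinuousLinearMap.one_def] using
    (ContinuousLinearMap.norm_id_le (E := EuclideanSpace ℂ I))

lemma opNorm_nonneg {I : Type*} [Fintype I] [DecidableEq I] (A : Matrix I I ℂ) :
    0 ≤ opNorm A := norm_nonneg _

lemma opNorm_le_one {I : Type*} [Fintype I] [DecidableEq I] {A : Matrix I I ℂ}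
    (hA : Aᴴ = A) (h2 : A * A = 1) : opNorm A ≤ 1 := by
  have h := opNorm_sq A hA
  rw [h2] at h
  nlinarith [opNorm_nonneg A, opNorm_one_le (I := I)]

end PauliAux

open Parity PauliString in
/-- Example 3.6: parity norm bound for the Pauli strings,
`‖B_n‖² ≤ 3` for odd `n` and `‖B_n‖² ≤ 9` for even `n`. -/
theorem pauli_string_parity_norm_bound {n : ℕ} (hn : 1 ≤ n) :
    (Odd n → opNorm (B n) ^ 2 ≤ 3) ∧ (Even n → opNorm (B n) ^ 2 ≤ 9) := by
  constructor
  · intro hodd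
    rw [PauliAux.opNorm_sq _ (PauliAux.B_herm n), PauliAux.B_sq hodd]
    calc opNorm ((3 : ℂ) • (1 : Matrix (∀ _ : Fin n, Fin 2) (∀ _ : Fin n, Fin 2) ℂ))
        = ‖(3 : ℂ)‖ * opNorm (1 : Matrix (∀ _ : Fin n, Fin 2) (∀ _ : Fin n, Fin 2) ℂ) := by
          simp only [opNorm, _root_.map_smul]
          exact norm_smul (3 : ℂ)
            (Matrix.toEuclideanCLM (𝕜 := ℂ)
              (1 : Matrix (∀ _ : Fin n, Fin 2) (∀ _ : Fin n, Fin 2) ℂ))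
      _ ≤ 3 * 1 := by
          have h1 := PauliAux.opNorm_one_le (I := ∀ _ : Fin n, Fin 2)
          have h0 := PauliAux.opNorm_nonneg
            (1 : Matrix (∀ _ : Fin n, Fin 2) (∀ _ : Fin n, Fin 2) ℂ)
          have h3 : ‖(3 : ℂ)‖ = 3 := by norm_num
          rw [h3]
          nlinarith
      _ = 3 := by norm_num
  · intro _
    have hx := PauliAux.opNorm_le_one (PauliAux.K_herm (n := n) PauliAux.XH)
      (PauliAux.K_sq_one PauliAux.XX)
    have hy := PauliAux.opNorm_le_one (PauliAux.K_herm (n := n) PauliAux.YH)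
      (PauliAux.K_sq_one PauliAux.YY)
    have hz := PauliAux.opNorm_le_one (PauliAux.K_herm (n := n) PauliAux.ZH)
      (PauliAux.K_sq_one PauliAux.ZZ)
    have hB : opNorm (B n) ≤ 3 := by
      rw [PauliAux.B_eq, opNorm, map_add, map_add]
      calc ‖Matrix.toEuclideanCLM (𝕜 := ℂ) (PauliAux.K n X)
            + Matrix.toEuclideanCLM (𝕜 := ℂ) (PauliAux.K n Y)
            + Matrix.toEuclideanCLM (𝕜 := ℂ) (PauliAux.K n Z)‖
          ≤ ‖Matrix.toEuclideanCLM (𝕜 := ℂ) (PauliAux.K n X)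
            + Matrix.toEuclideanCLM (𝕜 := ℂ) (PauliAux.K n Y)‖
            + ‖Matrix.toEuclideanCLM (𝕜 := ℂ) (PauliAux.K n Z)‖ := norm_add_le _ _
        _ ≤ ‖Matrix.toEuclideanCLM (𝕜 := ℂ) (PauliAux.K n X)‖
            + ‖Matrix.toEuclideanCLM (𝕜 := ℂ) (PauliAux.K n Y)‖
            + ‖Matrix.toEuclideanCLM (𝕜 := ℂ) (PauliAux.K n Z)‖ := by
              have := norm_add_le (Matrix.toEuclideanCLM (𝕜 := ℂ) (PauliAux.K n X))
                (Matrix.toEuclideanCLM (𝕜 := ℂ) (PauliAux.K n Y))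
              linarith
        _ ≤ 3 := by
              rw [opNorm] at hx hy hz
              linarith
    nlinarith [PauliAux.opNorm_nonneg (B n)]
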